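/- Let φ: G → B be a fibration between directed multigraphs surjective on nodes (preserving weights if graphs are weighted). For any row vector v indexed by nodes of B and any α with |α| ρ(G) < 1 and |α| ρ(B) < 1, we have v^φ (I − αG)^{-1} = (v (I − αB)^{-1})^φ, where v^φ is defined by (v^φ)_i = v_{φ(i)}. -/

import Mathlib

/-- A directed multigraph: a set of nodes, a set of arcs, and source/target maps. -/
structure Multigraph (N A : Type*) where
  src : A → N
  tgt : A → N

/-- The adjacency matrix of a multigraph (over `ℝ`): entry `(x, y)` counts the arcs
from `x` to `y` with multiplicity. -/
noncomputable def adjMat {N A : Type*} [Fintype A] [DecidableEq N]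
    (G : Multigraph N A) : Matrix N N ℝ :=
  fun x y => ((Finset.univ.filter fun a => G.src a = x ∧ G.tgt a = y).card : ℝ)

/-- A graph fibration `φ : G → B`: a morphism of multigraphs (commuting with source
and target maps) such that every arc of `B` lifts uniquely at each node of `G` in
the fiber over its target. -/
structure Fibration {N A N' A' : Type*} (G : Multigraph N A) (B : Multigraph N' A') where
  nodeMap : N → N'
  arcMap : A → A'
  src_comm : ∀ a : A, B.src (arcMap a) = nodeMap (G.src a)
  tgt_comm : ∀ a : A, B.tgt (arcMap a) = nodeMap (G.tgt a)
  lift : ∀ (a : A') (x : N), nodeMap x = B.tgt a →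
    ∃! (la : A), arcMap la = a ∧ G.tgt la = x

/-- The spectral radius of a real square matrix: the supremum of the absolute values
of its (complex) eigenvalues. -/
noncomputable def specRad {n : Type*} [Fintype n] [DecidableEq n]
    (M : Matrix n n ℝ) : ℝ :=
  sSup ((fun z : ℂ => ‖z‖) '' spectrum ℂ (M.map (algebraMap ℝ ℂ)))

/-- If `|α| ρ(M) < 1` then `1 - α • M` has invertible determinant. -/
lemma isUnit_one_sub_smul_of_specRad {n : Type*} [Fintype n] [DecidableEq n]
    (M : Matrix n n ℝ) (α : ℝ) (h : |α| * specRad M < 1) :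
    IsUnit (1 - α • M).det := by
  rw [isUnit_iff_ne_zero]
  intro hdet
  rcases eq_or_ne α 0 with rfl | hα
  · simp at hdet
  set Mc := M.map (algebraMap ℝ ℂ) with hMc
  have hmap : (1 - α • M).map (algebraMap ℝ ℂ) = 1 - (α : ℂ) • Mc := by
    ext i j
    simp [hMc, Matrix.map_apply, Matrix.one_apply, apply_ite]
  have hdetC : (1 - (α : ℂ) • Mc).det = 0 := by
    rw [← hmap, ← RingHom.mapMatrix_apply, ← RingHom.map_det, hdet, map_zero]
  have hαC : (α : ℂ) ≠ 0 := by exact_mod_cast hα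
  have hmem : (α : ℂ)⁻¹ ∈ spectrum ℂ Mc := by
    rw [spectrum.mem_iff, Matrix.isUnit_iff_isUnit_det, isUnit_iff_ne_zero, not_not]
    have hrw : (algebraMap ℂ (Matrix n n ℂ)) (α : ℂ)⁻¹ - Mc
        = (α : ℂ)⁻¹ • (1 - (α : ℂ) • Mc) := by
      rw [smul_sub, smul_smul, inv_mul_cancel₀ hαC, one_smul]
      congr 1
      exact Algebra.algebraMap_eq_smul_one _
    rw [hrw, Matrix.det_smul, hdetC, mul_zero]
  have hle : ‖(α : ℂ)⁻¹‖ ≤ specRad M := by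
    refine le_csSup ?_ ⟨_, hmem, rfl⟩
    exact Set.Finite.bddAbove (Set.Finite.image _ (Matrix.finite_spectrum _))
  have habs : ‖(α : ℂ)⁻¹‖ = |α|⁻¹ := by
    rw [norm_inv, Complex.norm_real, Real.norm_eq_abs]
  have hα' : (0 : ℝ) < |α| := abs_pos.mpr hα
  have h1 : (1 : ℝ) ≤ |α| * specRad M := by
    calc (1 : ℝ) = |α| * |α|⁻¹ := by field_simp
    _ ≤ |α| * specRad M := by
        apply mul_le_mul_of_nonneg_left _ (le_of_lt hα')
        rw [← habs]; exact hle
  linarith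

/-- Key combinatorial fact: lifting a vector commutes with the adjacency matrix. -/
lemma vecMul_adjMat_comm {N A N' A' : Type*}
    [Fintype N] [Fintype N'] [Fintype A] [Fintype A'] [DecidableEq N] [DecidableEq N']
    (G : Multigraph N A) (B : Multigraph N' A') (φ : Fibration G B) (u : N' → ℝ) :
    Matrix.vecMul (u ∘ φ.nodeMap) (adjMat G) = (Matrix.vecMul u (adjMat B)) ∘ φ.nodeMap := by
  funext y
  have hL : Matrix.vecMul (u ∘ φ.nodeMap) (adjMat G) y
      = ∑ a ∈ Finset.univ.filter (fun a => G.tgt a = y), u (φ.nodeMap (G.src a)) := by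
    show (∑ x, (u ∘ φ.nodeMap) x * adjMat G x y) = _
    calc ∑ x, (u ∘ φ.nodeMap) x * adjMat G x y
        = ∑ x, ∑ a : A, if G.src a = x ∧ G.tgt a = y then u (φ.nodeMap x) else 0 := by
          refine Finset.sum_congr rfl fun x _ => ?_
          rw [adjMat, Finset.card_filter]
          push_cast
          rw [Finset.mul_sum]
          simp [mul_ite, Function.comp]
      _ = ∑ a : A, ∑ x, if G.src a = x ∧ G.tgt a = y then u (φ.nodeMap x) else 0 :=
          Finset.sum_comm
      _ = ∑ a : A, if G.tgt a = y then u (φ.nodeMap (G.src a)) else 0 := by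
          refine Finset.sum_congr rfl fun a _ => ?_
          by_cases h : G.tgt a = y
          · simp [h, Finset.sum_ite_eq]
          · simp [h]
      _ = _ := by rw [Finset.sum_filter]
  have hR : (Matrix.vecMul u (adjMat B)) (φ.nodeMap y)
      = ∑ a ∈ Finset.univ.filter (fun a => B.tgt a = φ.nodeMap y), u (B.src a) := by
    show (∑ x, u x * adjMat B x (φ.nodeMap y)) = _
    calc ∑ x, u x * adjMat B x (φ.nodeMap y)
        = ∑ x, ∑ a : A', if B.src a = x ∧ B.tgt a = φ.nodeMap y then u x else 0 := by
          refine Finset.sum_congr rfl fun x _ => ?_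
          rw [adjMat, Finset.card_filter]
          push_cast
          rw [Finset.mul_sum]
          simp [mul_ite]
      _ = ∑ a : A', ∑ x, if B.src a = x ∧ B.tgt a = φ.nodeMap y then u x else 0 :=
          Finset.sum_comm
      _ = ∑ a : A', if B.tgt a = φ.nodeMap y then u (B.src a) else 0 := by
          refine Finset.sum_congr rfl fun a _ => ?_
          by_cases h : B.tgt a = φ.nodeMap y
          · simp [h, Finset.sum_ite_eq]
          · simp [h]
      _ = _ := by rw [Finset.sum_filter]
  rw [hL, Function.comp_apply, hR]
  refine Finset.sum_bij (fun a _ => φ.arcMap a) ?_ ?_ ?_ ?_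
  · intro a ha
    simp only [Finset.mem_filter, Finset.mem_univ, true_and] at ha ⊢
    rw [φ.tgt_comm, ha]
  · intro a1 h1 a2 h2 heq
    simp only [Finset.mem_filter, Finset.mem_univ, true_and] at h1 h2
    have hlift := φ.lift (φ.arcMap a1) y (by rw [φ.tgt_comm, h1])
    exact (hlift.unique ⟨rfl, h1⟩ ⟨heq.symm, h2⟩)
  · intro a' ha'
    simp only [Finset.mem_filter, Finset.mem_univ, true_and] at ha'
    obtain ⟨la, ⟨hla1, hla2⟩, _⟩ := φ.lift a' y (by rw [ha'])
    exact ⟨la, by simp [hla2], hla1⟩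
  · intro a ha
    rw [φ.src_comm]

lemma vecMul_smul_right {m : Type*} [Fintype m] (M : Matrix m m ℝ) (α : ℝ) (x : m → ℝ) :
    Matrix.vecMul x (α • M) = α • Matrix.vecMul x M := by
  funext j
  simp only [Matrix.vecMul, dotProduct, Matrix.smul_apply, Pi.smul_apply,
    smul_eq_mul, Finset.mul_sum]
  refine Finset.sum_congr rfl fun i _ => ?_
  ring

/-- If `φ : G → B` is a node-surjective fibration and `|α| ρ(G) < 1`,
`|α| ρ(B) < 1`, then lifting commutes with the resolvent:
`v^φ (I - αG)⁻¹ = (v (I - αB)⁻¹)^φ`. -/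
theorem fibration_resolvent_comm {N A N' A' : Type*}
    [Fintype N] [Fintype N'] [Fintype A] [Fintype A'] [DecidableEq N] [DecidableEq N']
    (G : Multigraph N A) (B : Multigraph N' A') (φ : Fibration G B)
    (hsurj : Function.Surjective φ.nodeMap) (v : N' → ℝ) (α : ℝ)
    (hG : |α| * specRad (adjMat G) < 1) (hB : |α| * specRad (adjMat B) < 1) :
    Matrix.vecMul (v ∘ φ.nodeMap) (1 - α • adjMat G)⁻¹ =
      (Matrix.vecMul v (1 - α • adjMat B)⁻¹) ∘ φ.nodeMap := by
  have hGu := isUnit_one_sub_smul_of_specRad (adjMat G) α hG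
  have hBu := isUnit_one_sub_smul_of_specRad (adjMat B) α hB
  set w := Matrix.vecMul v (1 - α • adjMat B)⁻¹ with hw
  have hwv : Matrix.vecMul w (1 - α • adjMat B) = v := by
    rw [hw, Matrix.vecMul_vecMul, Matrix.nonsing_inv_mul _ hBu, Matrix.vecMul_one]
  have key : Matrix.vecMul (w ∘ φ.nodeMap) (1 - α • adjMat G) = v ∘ φ.nodeMap := by
    rw [Matrix.vecMul_sub, Matrix.vecMul_one, vecMul_smul_right, vecMul_adjMat_comm G B φ w]
    funext x
    have := congrFun hwv (φ.nodeMap x)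
    rw [Matrix.vecMul_sub, Matrix.vecMul_one] at this
    simpa [vecMul_smul_right, Matrix.vecMul_sub] using this
  calc Matrix.vecMul (v ∘ φ.nodeMap) (1 - α • adjMat G)⁻¹
      = Matrix.vecMul (Matrix.vecMul (w ∘ φ.nodeMap) (1 - α • adjMat G))
          (1 - α • adjMat G)⁻¹ := by rw [key]
    _ = w ∘ φ.nodeMap := by
        rw [Matrix.vecMul_vecMul, Matrix.mul_nonsing_inv _ hGu, Matrix.vecMul_one]
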